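/- Fix ε ∈ (0,1), η > 0 and α ≥ 0. Consider the instance with U⁺ = 1, U⁻ = −11/10, C⁺ = 1, C⁻ = −11/10, w_A = w_B = 1/2, where D_A places mass ε at a score x with p(x) = 1 and mass 1−ε at a score x'' with p(x'') = 0, and D_B places mass ε at x' = x − η with p(x') = 11/21 and mass 1−ε at the same x'' (with x'' < x'). Then: (i) the total variation distance between D_A and D_B equals ε; (ii) x'' lies in category C₄ since E[u(x'')] = −11/10 < 0 and E[Δ(x'')] = −11/10 < 0; (iii) OPT = ε/2; (iv) every non-degrading α-fair policy satisfies π_A(x) ≤ α/ε − η and hence has utility at most (α − εη)/2. Consequently, the restriction of the Price of Fairness to non-degrading policies on this instance is at least 1 − (α/ε − η). -/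

import Mathlib

/-- **Theorem 3.13 / Proposition A.3 construction.** For the
instance with `U⁺ = 1`, `U⁻ = −11/10`, `C⁺ = 1`, `C⁻ = −11/10`, equal group
weights, where `D_A` places mass `ε` at `x` (with `p(x) = 1`) and mass `1−ε` at
`x''` (with `p(x'') = 0`), and `D_B` places mass `ε` at `x' = x − η` (with
`p(x') = 11/21`) and mass `1−ε` at the same `x''` (with `x'' < x'`):
(i) the total variation distance between `D_A` and `D_B` is `ε`;
(ii) `x''` is in category `C₄`; (iii) `OPT = ε/2`; (iv) every non-degrading
`α`-fair policy has `π_A(x) ≤ α/ε − η` and utility at most `(α − εη)/2`;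
hence the PoF restricted to non-degrading policies is at least `1 − (α/ε − η)`. -/
theorem pof_lower_bound_small_tv_instance
    (ε η α x x'' : ℝ) (hε : ε ∈ Set.Ioo (0 : ℝ) 1) (hη : 0 < η) (hα : 0 ≤ α)
    (hx'' : x'' < x - η)
    (Up Um Cp Cm : ℝ)
    (hUp : Up = 1) (hUm : Um = -(11/10)) (hCp : Cp = 1) (hCm : Cm = -(11/10))
    (p : ℝ → ℝ) (hpx : p x = 1) (hpx' : p (x - η) = 11/21) (hpx'' : p x'' = 0)
    (DA DB : ℝ → ℝ)
    (hDA : DA = fun s => if s = x then ε else if s = x'' then 1 - ε else 0)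
    (hDB : DB = fun s => if s = x - η then ε else if s = x'' then 1 - ε else 0) :
    let Eu : ℝ → ℝ := fun s => p s * Up + (1 - p s) * Um
    let Ed : ℝ → ℝ := fun s => p s * Cp + (1 - p s) * Cm
    -- a policy is a quadruple (a, a'', b, b''): the selection probabilities
    -- π_A(x), π_A(x''), π_B(x'), π_B(x'')
    let V : ℝ → ℝ → ℝ → ℝ → ℝ := fun a a'' b b'' =>
      (1/2) * (a * DA x * Eu x + a'' * DA x'' * Eu x'') +
      (1/2) * (b * DB (x - η) * Eu (x - η) + b'' * DB x'' * Eu x'')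
    let gap : ℝ → ℝ → ℝ → ℝ → ℝ := fun a a'' b b'' =>
      |((DA x * x + DA x'' * x'') + (a * DA x * Ed x + a'' * DA x'' * Ed x'')) -
        ((DB (x - η) * (x - η) + DB x'' * x'') +
          (b * DB (x - η) * Ed (x - η) + b'' * DB x'' * Ed x''))|
    -- (i) total variation distance between D_A and D_B equals ε
    ((1/2) * (|DA x - DB x| + |DA (x - η) - DB (x - η)| + |DA x'' - DB x''|) = ε ∧
      ∀ s, s ≠ x → s ≠ x - η → s ≠ x'' → DA s = DB s) ∧
    -- (ii) x'' is in category C₄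
    (Eu x'' = -(11/10) ∧ Eu x'' < 0 ∧ Ed x'' = -(11/10) ∧ Ed x'' < 0) ∧
    -- (iii) OPT = ε/2
    (V 1 0 0 0 = ε / 2 ∧
      ∀ a ∈ Set.Icc (0 : ℝ) 1, ∀ a'' ∈ Set.Icc (0 : ℝ) 1,
        ∀ b ∈ Set.Icc (0 : ℝ) 1, ∀ b'' ∈ Set.Icc (0 : ℝ) 1,
          V a a'' b b'' ≤ ε / 2) ∧
    -- (iv) every non-degrading α-fair policy satisfies π_A(x) ≤ α/ε − η
    -- and has utility at most (α − εη)/2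
    (∀ a ∈ Set.Icc (0 : ℝ) 1, ∀ b ∈ Set.Icc (0 : ℝ) 1, gap a 0 b 0 ≤ α →
      a ≤ α / ε - η ∧ V a 0 b 0 ≤ (α - ε * η) / 2) ∧
    -- consequently the PoF restricted to non-degrading policies is at least
    -- 1 − (α/ε − η)
    (∀ a ∈ Set.Icc (0 : ℝ) 1, ∀ b ∈ Set.Icc (0 : ℝ) 1, gap a 0 b 0 ≤ α →
      1 - (α / ε - η) ≤ 1 - V a 0 b 0 / (ε / 2)) := by
  obtain ⟨hε0, hε1⟩ := hε
  have hne1 : x - η ≠ x := by intro h; linarith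
  have hne2 : x'' ≠ x := by intro h; linarith
  have hne3 : x'' ≠ x - η := by intro h; linarith
  intro Eu Ed V gap
  have hEux : Eu x = 1 := by simp [Eu, hpx, hUp, hUm]
  have hEux' : Eu (x - η) = 0 := by simp [Eu, hpx', hUp, hUm]; ring
  have hEux'' : Eu x'' = -(11/10) := by simp [Eu, hpx'', hUp, hUm]
  have hEdx : Ed x = 1 := by simp [Ed, hpx, hCp, hCm]
  have hEdx' : Ed (x - η) = 0 := by simp [Ed, hpx', hCp, hCm]; ring
  have hEdx'' : Ed x'' = -(11/10) := by simp [Ed, hpx'', hCp, hCm]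
  have hDAx : DA x = ε := by simp [hDA]
  have hDAx' : DA (x - η) = 0 := by simp [hDA, hne1, hne3.symm]
  have hDAx'' : DA x'' = 1 - ε := by simp [hDA, hne2]
  have hDBx : DB x = 0 := by simp [hDB, hne1.symm, hne2.symm]
  have hDBx' : DB (x - η) = ε := by simp [hDB]
  have hDBx'' : DB x'' = 1 - ε := by simp [hDB, hne3]
  have hVval : ∀ a a'' b b'' : ℝ, V a a'' b b'' =
      (1/2) * (a * ε + a'' * (1 - ε) * (-(11/10)) + b'' * (1 - ε) * (-(11/10))) := by
    intro a a'' b b''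
    simp only [V, hDAx, hDAx'', hDBx', hDBx'', hEux, hEux', hEux'']
    ring
  refine ⟨⟨?_, ?_⟩, ⟨hEux'', by rw [hEux'']; norm_num, hEdx'', by rw [hEdx'']; norm_num⟩,
    ⟨?_, ?_⟩, ?_, ?_⟩
  · rw [hDAx, hDAx', hDAx'', hDBx, hDBx', hDBx'']
    rw [show ε - (0:ℝ) = ε by ring, show (0:ℝ) - ε = -ε by ring, abs_neg,
      abs_of_pos hε0, sub_self, abs_zero]
    ring
  · intro s h1 h2 h3
    simp [hDA, hDB, h1, h2, h3]
  · rw [hVval]; ring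
  · intro a ha a'' ha'' b hb b'' hb''
    rw [hVval]
    nlinarith [ha.1, ha.2, ha''.1, hb''.1, mul_nonneg ha''.1 (by linarith : (0:ℝ) ≤ 1 - ε),
      mul_nonneg hb''.1 (by linarith : (0:ℝ) ≤ 1 - ε)]
  · intro a ha b hb hgap
    have hg : gap a 0 b 0 = ε * (η + a) := by
      simp only [gap, hDAx, hDAx'', hDBx', hDBx'', hEdx, hEdx', hEdx'']
      rw [show ε * x + (1 - ε) * x'' + (a * ε * 1 + 0 * (1 - ε) * -(11/10)) -
          (ε * (x - η) + (1 - ε) * x'' + (b * ε * 0 + 0 * (1 - ε) * -(11/10)))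
          = ε * (η + a) by ring]
      exact abs_of_nonneg (mul_nonneg hε0.le (by linarith [ha.1]))
    rw [hg] at hgap
    constructor
    · rw [le_sub_iff_add_le, le_div_iff₀ hε0]; nlinarith
    · rw [hVval]; nlinarith
  · intro a ha b hb hgap
    have hg : gap a 0 b 0 = ε * (η + a) := by
      simp only [gap, hDAx, hDAx'', hDBx', hDBx'', hEdx, hEdx', hEdx'']
      rw [show ε * x + (1 - ε) * x'' + (a * ε * 1 + 0 * (1 - ε) * -(11/10)) -
          (ε * (x - η) + (1 - ε) * x'' + (b * ε * 0 + 0 * (1 - ε) * -(11/10)))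
          = ε * (η + a) by ring]
      exact abs_of_nonneg (mul_nonneg hε0.le (by linarith [ha.1]))
    rw [hg] at hgap
    have hdiv : V a 0 b 0 / (ε / 2) = a := by
      rw [hVval]
      field_simp
      ring
    rw [hdiv]
    have : a ≤ α / ε - η := by rw [le_sub_iff_add_le, le_div_iff₀ hε0]; nlinarith
    linarith
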